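/- If a connected graph G is a Gallai-tree, i.e., every block of G is a complete graph or an odd cycle, then G is not degree-choosable: there exists a list assignment L with |L(v)| = deg_G(v) for all v such that G has no proper L-colouring. -/

import Mathlib

/-- The degree of a vertex: the number of its neighbours. -/
noncomputable def deg {V : Type*} (G : SimpleGraph V) (v : V) : ℕ :=
  (G.neighborSet v).ncard
/-- `B` induces a connected subgraph without cut vertices when the deletion of any of
its vertices leaves the induced subgraph preconnected. -/
def NoCutVertex {V : Type*} (G : SimpleGraph V) (B : Set V) : Prop :=
  ∀ v ∈ B, (G.induce (B \ {v})).Preconnected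

/-- A block: a maximal set of vertices inducing a connected subgraph without cut
vertices. -/
def IsBlock {V : Type*} (G : SimpleGraph V) (B : Set V) : Prop :=
  (G.induce B).Connected ∧ NoCutVertex G B ∧
    ∀ B' : Set V, B ⊆ B' → (G.induce B').Connected → NoCutVertex G B' → B' = B

/-- `B` induces a complete subgraph. -/
def IsCompleteSet {V : Type*} (G : SimpleGraph V) (B : Set V) : Prop :=
  ∀ u ∈ B, ∀ v ∈ B, u ≠ v → G.Adj u v

/-- `B` induces a cycle: a connected 2-regular subgraph on at least 3 vertices. -/
noncomputable def IsCycleSet {V : Type*} (G : SimpleGraph V) (B : Set V) : Prop :=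
  (G.induce B).Connected ∧ 3 ≤ B.ncard ∧ ∀ v ∈ B, {u ∈ B | G.Adj v u}.ncard = 2

/-- A GDP-tree: a connected graph all of whose blocks are complete graphs or cycles. -/
noncomputable def IsGDPTree {V : Type*} (G : SimpleGraph V) : Prop :=
  G.Connected ∧ ∀ B : Set V, IsBlock G B → IsCompleteSet G B ∨ IsCycleSet G B

/-- A Gallai-tree: a connected graph all of whose blocks are complete graphs or odd
cycles. -/
noncomputable def IsGallaiTree {V : Type*} (G : SimpleGraph V) : Prop :=
  G.Connected ∧ ∀ B : Set V, IsBlock G B →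
    IsCompleteSet G B ∨ (IsCycleSet G B ∧ Odd B.ncard)

open SimpleGraph Set

namespace GTaux
variable {V : Type*} {G : SimpleGraph V} {S T B : Set V} {u v w : V}

/-- Reachability within a vertex set `S`, via walks whose support lies in `S`. -/
def ReachIn (G : SimpleGraph V) (S : Set V) (u v : V) : Prop :=
  ∃ p : G.Walk u v, ∀ x ∈ p.support, x ∈ S

def PreconnIn (G : SimpleGraph V) (S : Set V) : Prop :=
  ∀ u ∈ S, ∀ v ∈ S, ReachIn G S u v

def GoodIn (G : SimpleGraph V) (S : Set V) : Prop :=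
  S.Nonempty ∧ PreconnIn G S ∧ ∀ v ∈ S, PreconnIn G (S \ {v})

def BlockIn (G : SimpleGraph V) (S B : Set V) : Prop :=
  B ⊆ S ∧ GoodIn G B ∧ ∀ B', B ⊆ B' → B' ⊆ S → GoodIn G B' → B' = B

noncomputable def degIn (G : SimpleGraph V) (S : Set V) (v : V) : ℕ :=
  {u ∈ S | G.Adj v u}.ncard

lemma ReachIn.mem_left (h : ReachIn G S u v) : u ∈ S := by
  obtain ⟨p, hp⟩ := h; exact hp _ p.start_mem_support

lemma ReachIn.mem_right (h : ReachIn G S u v) : v ∈ S := by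
  obtain ⟨p, hp⟩ := h; exact hp _ p.end_mem_support

lemma ReachIn.refl (h : u ∈ S) : ReachIn G S u u :=
  ⟨SimpleGraph.Walk.nil, by simp [h]⟩

lemma ReachIn.symm (h : ReachIn G S u v) : ReachIn G S v u := by
  obtain ⟨p, hp⟩ := h
  exact ⟨p.reverse, by simpa using hp⟩

lemma ReachIn.trans (h : ReachIn G S u v) (h' : ReachIn G S v w) : ReachIn G S u w := by
  obtain ⟨p, hp⟩ := h; obtain ⟨q, hq⟩ := h'
  refine ⟨p.append q, ?_⟩
  intro x hx
  rcases (SimpleGraph.Walk.mem_support_append_iff _ _).1 hx with h | h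
  exacts [hp _ h, hq _ h]

lemma ReachIn.mono (hST : S ⊆ T) (h : ReachIn G S u v) : ReachIn G T u v := by
  obtain ⟨p, hp⟩ := h; exact ⟨p, fun x hx => hST (hp x hx)⟩

lemma ReachIn.of_adj (h : G.Adj u v) (hu : u ∈ S) (hv : v ∈ S) : ReachIn G S u v :=
  ⟨h.toWalk, by simp [hu, hv]⟩

/-- Every vertex on a witness walk is itself `ReachIn`-reachable. -/
lemma ReachIn.support_reach [DecidableEq V] {p : G.Walk u v} (hp : ∀ x ∈ p.support, x ∈ S)
    (hw : w ∈ p.support) : ReachIn G S u w :=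
  ⟨p.takeUntil w hw, fun x hx => hp x (SimpleGraph.Walk.support_takeUntil_subset _ _ hx)⟩

/-- Bridge: walks in the induced graph give `ReachIn`. -/
lemma reachIn_of_induce_walk : ∀ {a b : S} (_ : (G.induce S).Walk a b), ReachIn G S a b := by
  intro a b p
  induction p with
  | nil => exact ReachIn.refl (Subtype.coe_prop _)
  | @cons a c b h q ih =>
    exact (ReachIn.of_adj (show G.Adj a.1 c.1 from h) a.2 c.2).trans ih

lemma induce_reachable_of_reachIn :
    ∀ {a b : V} (p : G.Walk a b) (hp : ∀ x ∈ p.support, x ∈ S),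
      (G.induce S).Reachable ⟨a, hp _ p.start_mem_support⟩ ⟨b, hp _ p.end_mem_support⟩ := by
  intro a b p
  induction p with
  | nil => intro _; rfl
  | @cons a c b h q ih =>
    intro hp
    have hc : c ∈ S := hp _ (by simp)
    have ha : a ∈ S := hp _ (by simp)
    have hq : ∀ x ∈ q.support, x ∈ S := fun x hx => hp _ (by simp [hx])
    have h1 : (G.induce S).Adj ⟨a, ha⟩ ⟨c, hc⟩ := h
    exact (SimpleGraph.Adj.reachable h1).trans (ih hq)

lemma preconnIn_iff : PreconnIn G S ↔ (G.induce S).Preconnected := by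
  constructor
  · intro h a b
    obtain ⟨p, hp⟩ := h a a.2 b b.2
    exact induce_reachable_of_reachIn p hp
  · intro h u hu v hv
    obtain ⟨p⟩ := h ⟨u, hu⟩ ⟨v, hv⟩
    exact reachIn_of_induce_walk p

lemma goodIn_iff : GoodIn G S ↔ (G.induce S).Connected ∧ NoCutVertex G S := by
  rw [SimpleGraph.connected_iff]
  unfold GoodIn NoCutVertex
  rw [← preconnIn_iff]
  constructor
  · rintro ⟨h1, h2, h3⟩
    exact ⟨⟨h2, Set.nonempty_coe_sort.2 h1⟩, fun v hv => preconnIn_iff.1 (h3 v hv)⟩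
  · rintro ⟨⟨h2, h1⟩, h3⟩
    exact ⟨Set.nonempty_coe_sort.1 h1, h2, fun v hv => preconnIn_iff.2 (h3 v hv)⟩

lemma blockIn_univ_iff : BlockIn G Set.univ B ↔ IsBlock G B := by
  unfold BlockIn IsBlock
  constructor
  · rintro ⟨-, hg, hmax⟩
    obtain ⟨hc, hncv⟩ := goodIn_iff.1 hg
    exact ⟨hc, hncv, fun B' hBB' hc' hncv' =>
      hmax B' hBB' (Set.subset_univ _) (goodIn_iff.2 ⟨hc', hncv'⟩)⟩
  · rintro ⟨hc, hncv, hmax⟩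
    refine ⟨Set.subset_univ _, goodIn_iff.2 ⟨hc, hncv⟩, fun B' hBB' _ hg' => ?_⟩
    obtain ⟨hc', hncv'⟩ := goodIn_iff.1 hg'
    exact hmax B' hBB' hc' hncv'

lemma degIn_univ (G : SimpleGraph V) (v : V) : degIn G Set.univ v = deg G v := by
  unfold degIn deg
  congr 1
  ext u
  simp [SimpleGraph.mem_neighborSet]


lemma good_singleton (hu : u ∈ S) : GoodIn G {u} := by
  refine ⟨⟨u, rfl⟩, ?_, ?_⟩
  · rintro a rfl b rfl
    exact ReachIn.refl rfl
  · rintro v rfl a ⟨rfl, ha⟩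
    simp at ha

lemma good_pair (h : G.Adj u v) : GoodIn G {u, v} := by
  have hne := h.ne
  refine ⟨⟨u, by simp⟩, ?_, ?_⟩
  · have h1 : ReachIn G {u, v} u v := ReachIn.of_adj h (by simp) (by simp)
    rintro a (rfl | rfl) b (rfl | rfl)
    exacts [ReachIn.refl (by simp), h1, h1.symm, ReachIn.refl (by simp)]
  · rintro w (rfl | rfl) a ⟨(rfl | rfl), ha⟩ b ⟨(rfl | rfl), hb⟩ <;>
      simp_all <;> exact ReachIn.refl (by simp_all)

lemma GoodIn.union (h1 : GoodIn G S) (h2 : GoodIn G T) {x y : V}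
    (hx : x ∈ S ∩ T) (hy : y ∈ S ∩ T) (hxy : x ≠ y) : GoodIn G (S ∪ T) := by
  obtain ⟨hne1, hp1, hc1⟩ := h1
  obtain ⟨hne2, hp2, hc2⟩ := h2
  have key : ∀ w : V, ∀ t ∈ S ∩ T, t ≠ w → ∀ a ∈ (S ∪ T) \ {w}, ReachIn G ((S ∪ T) \ {w}) a t := by
    intro w t ht htw a ⟨ha, haw⟩
    have haw' : a ≠ w := haw
    rcases ha with ha | ha
    · by_cases hwS : w ∈ S
      · exact (hc1 w hwS a ⟨ha, haw'⟩ t ⟨ht.1, htw⟩).mono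
          (fun z hz => ⟨Or.inl hz.1, hz.2⟩)
      · refine (hp1 a ha t ht.1).mono (fun z hz => ⟨Or.inl hz, ?_⟩)
        exact fun h => hwS (h ▸ hz)
    · by_cases hwT : w ∈ T
      · exact (hc2 w hwT a ⟨ha, haw'⟩ t ⟨ht.2, htw⟩).mono
          (fun z hz => ⟨Or.inr hz.1, hz.2⟩)
      · refine (hp2 a ha t ht.2).mono (fun z hz => ⟨Or.inr hz, ?_⟩)
        exact fun h => hwT (h ▸ hz)
  refine ⟨hne1.mono Set.subset_union_left, ?_, ?_⟩
  · intro a ha b hb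
    have hxx : x ∈ S ∪ T := Or.inl hx.1
    have h1 : ReachIn G (S ∪ T) a x := by
      rcases ha with ha | ha
      exacts [(hp1 a ha x hx.1).mono Set.subset_union_left,
        (hp2 a ha x hx.2).mono Set.subset_union_right]
    have h2 : ReachIn G (S ∪ T) b x := by
      rcases hb with hb | hb
      exacts [(hp1 b hb x hx.1).mono Set.subset_union_left,
        (hp2 b hb x hx.2).mono Set.subset_union_right]
    exact h1.trans h2.symm
  · intro w hw a ha b hb
    -- pick t ∈ S ∩ T, t ≠ w
    obtain ⟨t, ht, htw⟩ : ∃ t ∈ S ∩ T, t ≠ w := by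
      by_cases hxw : x = w
      · exact ⟨y, hy, fun h => hxy (hxw.trans h.symm)⟩
      · exact ⟨x, hx, hxw⟩
    exact (key w t ht htw a ha).trans (key w t ht htw b hb).symm

lemma exists_block_of_good [Fintype V] (hBS : B ⊆ S) (hB : GoodIn G B) :
    ∃ D, BlockIn G S D ∧ B ⊆ D := by
  classical
  set F : Set (Set V) := {T | B ⊆ T ∧ T ⊆ S ∧ GoodIn G T} with hF
  have hfin : F.Finite := Set.toFinite _
  have hne : F.Nonempty := ⟨B, subset_rfl, hBS, hB⟩
  obtain ⟨D, hD, hmax⟩ : ∃ D ∈ F, ∀ D' ∈ F, D.ncard ≤ D'.ncard → D.ncard = D'.ncard := by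
    obtain ⟨D, hD, h⟩ := Set.exists_max_image F Set.ncard hfin hne
    exact ⟨D, hD, fun D' hD' hle => le_antisymm hle (h D' hD')⟩
  refine ⟨D, ⟨hD.2.1, hD.2.2, ?_⟩, hD.1⟩
  intro B' hDB' hB'S hgB'
  have hB' : B' ∈ F := ⟨hD.1.trans hDB', hB'S, hgB'⟩
  have := hmax B' hB' (Set.ncard_le_ncard hDB' (Set.toFinite _))
  exact (Set.eq_of_subset_of_ncard_le hDB' this.ge (Set.toFinite _)).symm

lemma block_self_of_good (hS : GoodIn G S) : BlockIn G S S :=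
  ⟨subset_rfl, hS, fun B' h1 h2 _ => le_antisymm h2 h1⟩

lemma block_nontrivial [Fintype V] (hS : PreconnIn G S) (hS2 : ∃ x ∈ S, ∃ y ∈ S, x ≠ y)
    (hB : BlockIn G S B) : ∃ x ∈ B, ∃ y ∈ B, x ≠ y := by
  obtain ⟨hBS, ⟨⟨u, hu⟩, -, -⟩, hmax⟩ := hB
  by_contra h
  push_neg at h
  -- B = {u}
  have hBu : B = {u} := by
    apply Set.eq_singleton_iff_unique_mem.2 ⟨hu, fun x hx => h x hx u hu⟩
  obtain ⟨x, hx, y, hy, hxy⟩ := hS2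
  have hz : ∃ z ∈ S, G.Adj u z := by
    have hy' : ∃ y' ∈ S, y' ≠ u := by
      by_cases hxu : x = u
      · exact ⟨y, hy, fun h => hxy (hxu.trans h.symm)⟩
      · exact ⟨x, hx, hxu⟩
    obtain ⟨y', hy', hy'u⟩ := hy'
    obtain ⟨p, hp⟩ := hS u (hBS hu) y' hy'
    cases p with
    | nil => exact absurd rfl hy'u.symm
    | cons h q => exact ⟨_, hp _ (by simp), h⟩
  obtain ⟨z, hzS, huz⟩ := hz
  have := hmax {u, z} (by rw [hBu]; simp) (by rintro a (rfl | rfl); exacts [hBS hu, hzS])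
    (good_pair huz)
  rw [hBu] at this
  have : z ∈ ({u} : Set V) := this ▸ (by simp : z ∈ ({u, z} : Set V))
  exact huz.ne (by simpa using this.symm)


lemma lemK_aux : ∀ {z c : V} (q : G.Walk z c) (S K : Set V),
    (∀ z' ∈ K, ∀ z'', ReachIn G (S \ {c}) z' z'' → z'' ∈ K) → K ⊆ S \ {c} →
    (∀ w ∈ q.support, w ∈ S) → z ∈ K → ReachIn G (K ∪ {c}) z c := by
  intro z c q
  induction q with
  | nil =>
    intro S K _ hKsub _ hz
    exact absurd rfl (hKsub hz).2
  | @cons z z₂ c h q ih =>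
    intro S K hKcl hKsub hsup hz
    by_cases hz₂ : z₂ = c
    · subst hz₂
      exact ReachIn.of_adj h (Or.inl hz) (Or.inr rfl)
    · have hz₂S : z₂ ∈ S \ {c} := ⟨hsup _ (by simp), hz₂⟩
      have hz₂K : z₂ ∈ K := hKcl z hz z₂ (ReachIn.of_adj h (hKsub hz) hz₂S)
      exact (ReachIn.of_adj h (Or.inl hz) (Or.inl hz₂K)).trans
        (ih S K hKcl hKsub (fun w hw => hsup _ (by simp [hw])) hz₂K)

lemma exists_end_block [Fintype V] :
    ∀ (n : ℕ) (S : Set V), S.ncard ≤ n → S.Nonempty → PreconnIn G S → ∀ r ∈ S,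
      ∃ B v, BlockIn G S B ∧ v ∈ B ∧
        (∀ u ∈ B, u ≠ v → ∀ w ∈ S, G.Adj u w → w ∈ B) ∧ (r ∈ B → r = v) := by
  classical
  intro n
  induction n using Nat.strong_induction_on with
  | _ n IH =>
  intro S hSn hne hS r hr
  by_cases hgood : GoodIn G S
  · exact ⟨S, r, block_self_of_good hgood, hr, fun u _ _ w hw _ => hw, fun _ => rfl⟩
  · have hcut : ∃ c ∈ S, ¬ PreconnIn G (S \ {c}) := by
      by_contra h
      push_neg at h
      exact hgood ⟨hne, hS, h⟩
    obtain ⟨c, hc, hcp⟩ := hcut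
    rw [PreconnIn] at hcp
    push_neg at hcp
    obtain ⟨x, hx, y, hy, hxy⟩ := hcp
    set Kf : V → Set V := fun x₀ => {z | z ∈ S \ {c} ∧ ReachIn G (S \ {c}) x₀ z} with hKf
    have hKmem : ∀ x₀ ∈ S \ {c}, ∀ z, ReachIn G (S \ {c}) x₀ z → z ∈ Kf x₀ := by
      intro x₀ _ z hz
      exact ⟨hz.mem_right, hz⟩
    -- choose x' so that r ∉ Kf x'
    obtain ⟨x', y', hx', hy', hrK, hyK, hreach⟩ :
        ∃ x' y', x' ∈ S \ {c} ∧ y' ∈ S \ {c} ∧ r ∉ Kf x' ∧ y' ∉ Kf x' ∧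
          ¬ ReachIn G (S \ {c}) x' y' := by
      by_cases hrx : r ∈ Kf x
      · refine ⟨y, x, hy, hx, ?_, ?_, fun h => hxy h.symm⟩
        · rintro ⟨-, hry⟩
          exact hxy (hrx.2.trans hry.symm)
        · rintro ⟨-, hxy'⟩
          exact hxy hxy'.symm
      · refine ⟨x, y, hx, hy, hrx, ?_, hxy⟩
        rintro ⟨-, h⟩
        exact hxy h
    set K : Set V := Kf x' with hK
    have hxK : x' ∈ K := ⟨hx', ReachIn.refl hx'⟩
    set T : Set V := K ∪ {c} with hT
    have hTS : T ⊆ S := by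
      rintro z (hz | rfl)
      exacts [hz.1.1, hc]
    have hcT : c ∈ T := Or.inr rfl
    have hKT : K ⊆ T := Set.subset_union_left
    -- K is closed under ReachIn within S \ {c}
    have hKclosed : ∀ z ∈ K, ∀ z', ReachIn G (S \ {c}) z z' → z' ∈ K := by
      rintro z ⟨_, hz⟩ z' hzz'
      exact ⟨hzz'.mem_right, hz.trans hzz'⟩
    have hKsub : K ⊆ S \ {c} := fun z hz => hz.1
    have hreachc : ∀ z ∈ K, ReachIn G T z c := by
      intro z hz
      obtain ⟨q, hq⟩ := hS z hz.1.1 c hc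
      exact lemK_aux q S K hKclosed hKsub hq hz
    have hTpre : PreconnIn G T := by
      have key : ∀ z ∈ T, ReachIn G T z c := by
        rintro z (hz | rfl)
        exacts [hreachc z hz, ReachIn.refl hcT]
      intro a ha b hb
      exact (key a ha).trans (key b hb).symm
    have hTne : T.Nonempty := ⟨c, hcT⟩
    have hTlt : T.ncard < S.ncard := by
      apply Set.ncard_lt_ncard _ (Set.toFinite S)
      refine ⟨hTS, fun hST => ?_⟩
      have : y' ∈ T := hST hy'.1
      rcases this with h | h
      exacts [hyK h, hy'.2 h]
    obtain ⟨B, v, hB, hv, hclT, hroot⟩ :=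
      IH T.ncard (lt_of_lt_of_le hTlt hSn) T le_rfl hTne hTpre c hcT
    have hBT : B ⊆ T := hB.1
    -- B has two distinct elements, hence meets K
    have hb₀ : ∃ b₀ ∈ B, b₀ ∈ K := by
      obtain ⟨a1, ha1, a2, ha2, ha12⟩ := block_nontrivial hTpre
        ⟨x', hKT hxK, c, hcT, fun h => hx'.2 (by simp [h])⟩ hB
      rcases hBT ha1 with h | h
      · exact ⟨a1, ha1, h⟩
      · rcases hBT ha2 with h2 | h2
        · exact ⟨a2, ha2, h2⟩
        · exact absurd (h.trans h2.symm) ha12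
    obtain ⟨b₀, hb₀B, hb₀K⟩ := hb₀
    refine ⟨B, v, ⟨hBT.trans hTS, hB.2.1, ?_⟩, hv, ?_, ?_⟩
    · -- maximality in S
      intro B' hBB' hB'S hgB'
      refine hB.2.2 B' hBB' ?_ hgB'
      intro u hu
      by_cases huc : u = c
      · exact huc ▸ hcT
      · have hb₀B' : b₀ ∈ B' := hBB' hb₀B
        have hb₀c : b₀ ≠ c := hb₀K.1.2
        have huK : u ∈ K := by
          by_cases hcB' : c ∈ B'
          · have := hgB'.2.2 c hcB' b₀ ⟨hb₀B', hb₀c⟩ u ⟨hu, huc⟩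
            exact hKclosed b₀ hb₀K u (this.mono (fun z hz => ⟨hB'S hz.1, hz.2⟩))
          · have := hgB'.2.1 b₀ hb₀B' u hu
            exact hKclosed b₀ hb₀K u (this.mono (fun z hz => ⟨hB'S hz, fun h => hcB' (h ▸ hz)⟩))
        exact hKT huK
    · -- closure in S
      intro u hu huv w hw hadj
      have huc : u ≠ c := by
        intro h
        exact huv (h.trans (hroot (h ▸ hu)))
      have huK : u ∈ K := by
        rcases hBT hu with h | h
        exacts [h, absurd h huc]
      have hwT : w ∈ T := by
        by_cases hwc : w = c
        · exact hwc ▸ hcT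
        · exact hKT (hKclosed u huK w (ReachIn.of_adj hadj huK.1 ⟨hw, hwc⟩))
      exact hclT u hu huv w hwT hadj
    · -- root
      intro hrB
      have : r = c := by
        rcases hBT hrB with h | h
        exacts [absurd h hrK, h]
      exact this.trans (hroot (this ▸ hrB))


lemma stay_in_region : ∀ {a b : V} (p : G.Walk a b) (S R : Set V) (v : V),
    (∀ u ∈ R, ∀ w ∈ S, G.Adj u w → w ∉ R → w = v) →
    (∀ x ∈ p.support, x ∈ S \ {v}) → a ∈ R → b ∈ R := by
  intro a b p
  induction p with
  | nil => intro _ _ _ _ _ ha; exact ha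
  | @cons a z b h q ih =>
    intro S R v hexit hsup ha
    have hz : z ∈ S \ {v} := hsup _ (by simp)
    have hzR : z ∈ R := by
      by_contra hzR
      exact hz.2 (hexit a ha z hz.1 h hzR)
    exact ih S R v hexit (fun x hx => hsup _ (by simp [hx])) hzR

lemma avoid_region (S R : Set V) (v : V)
    (hexit : ∀ u ∈ R, ∀ w ∈ S, G.Adj u w → w ∉ R → w = v)
    (hvS : v ∈ S) (hvR : v ∉ R) :
    ∀ (n : ℕ) {a b : V} (p : G.Walk a b), p.length = n → (∀ x ∈ p.support, x ∈ S) →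
      (a ∉ R → b ∉ R → ReachIn G (S \ R) a b) ∧
      (a ∈ R → b ∉ R → ReachIn G (S \ R) v b) := by
  intro n
  induction n using Nat.strong_induction_on with
  | _ n IH =>
  intro a b p hlen hsup
  cases p with
  | nil =>
    refine ⟨fun ha _ => ReachIn.refl ⟨hsup _ (by simp), ha⟩, fun ha hb => absurd ha hb⟩
  | @cons a z b h q =>
    have hql : q.length < n := by
      rw [← hlen]; simp [SimpleGraph.Walk.length_cons]
    have hqs : ∀ x ∈ q.support, x ∈ S := fun x hx => hsup _ (by simp [hx])
    have IHq := IH q.length hql q rfl hqs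
    have haS : a ∈ S := hsup _ (by simp)
    have hzS : z ∈ S := hsup _ (by simp)
    constructor
    · intro ha hb
      by_cases hzR : z ∈ R
      · have hav : a = v := hexit z hzR a haS h.symm ha
        exact hav ▸ IHq.2 hzR hb
      · exact (ReachIn.of_adj h (show a ∈ S \ R from ⟨haS, ha⟩) (show z ∈ S \ R from ⟨hzS, hzR⟩)).trans (IHq.1 hzR hb)
    · intro ha hb
      by_cases hzR : z ∈ R
      · exact IHq.2 hzR hb
      · have hzv : z = v := hexit a ha z hzS h hzR
        exact hzv ▸ IHq.1 hzR hb


lemma clique_surj [Fintype V] {T : Set V} (hcl : ∀ u ∈ T, ∀ w ∈ T, u ≠ w → G.Adj u w)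
    {φ : V → ℕ} (hproper : ∀ u ∈ T, ∀ w ∈ T, G.Adj u w → φ u ≠ φ w)
    {C : Finset ℕ} (hmem : ∀ u ∈ T, φ u ∈ C) (hcard : C.card = T.ncard) :
    ∀ c ∈ C, ∃ u ∈ T, φ u = c := by
  classical
  have hinj : Set.InjOn φ T := by
    intro u hu w hw huw
    by_contra h
    exact hproper u hu w hw (hcl u hu w hw h) huw
  have hsub : T.toFinset.image φ ⊆ C := by
    intro c hc
    obtain ⟨u, hu, rfl⟩ := Finset.mem_image.1 hc
    exact hmem u (Set.mem_toFinset.1 hu)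
  have hcard2 : (T.toFinset.image φ).card = C.card := by
    rw [Finset.card_image_of_injOn (fun u hu w hw => hinj (Set.mem_toFinset.1 hu)
      (Set.mem_toFinset.1 hw)), hcard, Set.ncard_eq_toFinset_card']
  have heq : T.toFinset.image φ = C := Finset.eq_of_subset_of_card_le hsub hcard2.ge
  intro c hc
  rw [← heq] at hc
  obtain ⟨u, hu, h⟩ := Finset.mem_image.1 hc
  exact ⟨u, Set.mem_toFinset.1 hu, h⟩

lemma parity_lemma [Fintype V] {B : Set V}
    (hreg : ∀ u ∈ B, {w ∈ B | G.Adj u w}.ncard = 2) {a b : ℕ} (hab : a ≠ b)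
    {φ : V → ℕ} (hmem : ∀ u ∈ B, φ u = a ∨ φ u = b)
    (hproper : ∀ u ∈ B, ∀ w ∈ B, G.Adj u w → φ u ≠ φ w) :
    Even B.ncard := by
  classical
  set Bf := B.toFinset with hBf
  set N : V → Finset V := fun u => Bf.filter (fun w => G.Adj u w) with hN
  have hNcard : ∀ u ∈ Bf, (N u).card = 2 := by
    intro u hu
    have := hreg u (Set.mem_toFinset.1 hu)
    rw [Set.ncard_eq_toFinset_card'] at this
    rw [← this]
    congr 1
    ext w
    simp only [hN, Finset.mem_filter, hBf, Set.mem_toFinset, Set.mem_setOf_eq]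
  set A : Finset V := Bf.filter (fun u => φ u = a) with hA
  set B2 : Finset V := Bf.filter (fun u => φ u = b) with hB2
  have hsplit : Bf.card = A.card + B2.card := by
    rw [← Finset.card_union_of_disjoint]
    · congr 1
      ext u
      simp only [hA, hB2, Finset.mem_union, Finset.mem_filter]
      constructor
      · intro hu
        rcases hmem u (Set.mem_toFinset.1 hu) with h | h
        exacts [Or.inl ⟨hu, h⟩, Or.inr ⟨hu, h⟩]
      · rintro (⟨hu, -⟩ | ⟨hu, -⟩) <;> exact hu
    · rw [Finset.disjoint_left]
      rintro u hu hu'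
      rw [hA, Finset.mem_filter] at hu
      rw [hB2, Finset.mem_filter] at hu'
      exact hab (hu.2 ▸ hu'.2 ▸ rfl)
  -- edge sets
  set E : Finset (V × V) := A.biUnion (fun u => {u} ×ˢ N u) with hE
  set E' : Finset (V × V) := B2.biUnion (fun u => {u} ×ˢ N u) with hE'
  have hmemE : ∀ (C : Finset V) (p : V × V), p ∈ C.biUnion (fun u => {u} ×ˢ N u) ↔
      p.1 ∈ C ∧ p.2 ∈ N p.1 := by
    intro C p
    simp only [Finset.mem_biUnion, Finset.mem_product, Finset.mem_singleton]
    constructor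
    · rintro ⟨u, hu, rfl, h2⟩; exact ⟨hu, h2⟩
    · rintro ⟨h1, h2⟩; exact ⟨p.1, h1, rfl, h2⟩
  have hcardBU : ∀ C : Finset V, C ⊆ Bf → (C.biUnion (fun u => {u} ×ˢ N u)).card = 2 * C.card := by
    intro C hC
    rw [Finset.card_biUnion]
    · rw [Finset.sum_congr rfl (fun u hu => by
        rw [Finset.card_product, Finset.card_singleton, one_mul, hNcard u (hC hu)])]
      simp [Finset.sum_const, mul_comm]
    · intro u _ u' _ huu'
      rw [Function.onFun, Finset.disjoint_left]
      rintro p hp hp'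
      rw [Finset.mem_product, Finset.mem_singleton] at hp hp'
      exact huu' (hp.1 ▸ hp'.1 ▸ rfl)
  -- swap bijection between E and E'
  have hswap : ∀ p ∈ E, p.swap ∈ E' := by
    intro p hp
    rw [hmemE] at hp
    obtain ⟨h1, h2⟩ := hp
    rw [hN, Finset.mem_filter] at h2
    rw [hA, Finset.mem_filter] at h1
    have hp2b : φ p.2 = b := by
      rcases hmem p.2 (Set.mem_toFinset.1 h2.1) with h | h
      · exact absurd (h1.2.trans h.symm)
          (hproper p.1 (Set.mem_toFinset.1 h1.1) p.2 (Set.mem_toFinset.1 h2.1) h2.2)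
      · exact h
    rw [hmemE]
    exact ⟨Finset.mem_filter.2 ⟨h2.1, hp2b⟩, Finset.mem_filter.2 ⟨h1.1, h2.2.symm⟩⟩
  have hswap' : ∀ p ∈ E', p.swap ∈ E := by
    intro p hp
    rw [hmemE] at hp
    obtain ⟨h1, h2⟩ := hp
    rw [hN, Finset.mem_filter] at h2
    rw [hB2, Finset.mem_filter] at h1
    have hp2a : φ p.2 = a := by
      rcases hmem p.2 (Set.mem_toFinset.1 h2.1) with h | h
      · exact h
      · exact absurd (h1.2.trans h.symm)
          (hproper p.1 (Set.mem_toFinset.1 h1.1) p.2 (Set.mem_toFinset.1 h2.1) h2.2)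
    rw [hmemE]
    exact ⟨Finset.mem_filter.2 ⟨h2.1, hp2a⟩, Finset.mem_filter.2 ⟨h1.1, h2.2.symm⟩⟩
  have hEcard : E.card = E'.card := by
    refine Finset.card_bij (fun p _ => p.swap) hswap ?_ ?_
    · intro p hp q hq h
      exact Prod.swap_injective h
    · intro p hp
      exact ⟨p.swap, hswap' p hp, by simp⟩
  have h1 : E.card = 2 * A.card := hcardBU A (Finset.filter_subset _ _)
  have h2 : E'.card = 2 * B2.card := hcardBU B2 (Finset.filter_subset _ _)
  have hAB : A.card = B2.card := by omega
  rw [Set.ncard_eq_toFinset_card', ← hBf, hsplit, hAB]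
  exact ⟨B2.card, by ring⟩


lemma main_lemma [Fintype V] :
    ∀ (n : ℕ) (S : Set V), S.ncard ≤ n → S.Nonempty → PreconnIn G S →
      (∀ B, BlockIn G S B → IsCompleteSet G B ∨ (IsCycleSet G B ∧ Odd B.ncard)) →
      ∃ L : V → Finset ℕ, (∀ v ∈ S, (L v).card = degIn G S v) ∧
        ¬ ∃ φ : V → ℕ, (∀ v ∈ S, φ v ∈ L v) ∧ ∀ u ∈ S, ∀ w ∈ S, G.Adj u w → φ u ≠ φ w := by
  classical
  intro n
  induction n using Nat.strong_induction_on with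
  | _ n IH =>
  intro S hSn hne hS hGallai
  obtain ⟨r, hr⟩ := hne
  obtain ⟨B, v, hB, hv, hcl, -⟩ := exists_end_block n S hSn ⟨r, hr⟩ hS r hr
  by_cases hBS : B = S
  · -- single block case
    subst hBS
    rcases hGallai B hB with hcomp | ⟨⟨-, -, hreg⟩, hodd⟩
    · -- complete graph
      refine ⟨fun _ => Finset.range (B.ncard - 1), ?_, ?_⟩
      · intro u hu
        have hset : {w ∈ B | G.Adj u w} = B \ {u} := by
          ext w
          constructor
          · rintro ⟨hw, hadj⟩
            exact ⟨hw, fun h => G.ne_of_adj hadj (Set.mem_singleton_iff.1 h).symm⟩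
          · rintro ⟨hw, hwu⟩
            exact ⟨hw, hcomp u hu w hw (fun h => hwu (h ▸ rfl))⟩
        rw [Finset.card_range, degIn, hset, Set.ncard_diff_singleton_of_mem hu]
      · rintro ⟨φ, hm, hp⟩
        have hinj : Set.InjOn φ B := by
          intro x hx y hy hxy
          by_contra h
          exact hp x hx y hy (hcomp x hx y hy h) hxy
        have hsub : B.toFinset.image φ ⊆ Finset.range (B.ncard - 1) := by
          intro c hc
          obtain ⟨x, hx, rfl⟩ := Finset.mem_image.1 hc
          exact hm x (Set.mem_toFinset.1 hx)
        have hcard : (B.toFinset.image φ).card = B.ncard := by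
          rw [Finset.card_image_of_injOn (fun x hx y hy => hinj (Set.mem_toFinset.1 hx)
            (Set.mem_toFinset.1 hy)), Set.ncard_eq_toFinset_card']
        have hle := Finset.card_le_card hsub
        rw [hcard, Finset.card_range] at hle
        have hpos : 0 < B.ncard := (Set.ncard_pos (Set.toFinite B)).2 ⟨v, hv⟩
        omega
    · -- odd cycle
      refine ⟨fun _ => {0, 1}, ?_, ?_⟩
      · intro u hu
        show ({0, 1} : Finset ℕ).card = degIn G B u
        rw [degIn, hreg u hu]
        decide
      · rintro ⟨φ, hm, hp⟩
        have hmem : ∀ u ∈ B, φ u = 0 ∨ φ u = 1 := by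
          intro u hu
          have := hm u hu
          simp only [Finset.mem_insert, Finset.mem_singleton] at this
          exact this
        have := parity_lemma (G := G) hreg (by norm_num : (0:ℕ) ≠ 1) hmem hp
        exact Nat.not_even_iff_odd.2 hodd this
  · -- B is a proper end block
    set R : Set V := B \ {v} with hR
    set S' : Set V := S \ R with hS'
    have hBsub : B ⊆ S := hB.1
    have hvS : v ∈ S := hBsub hv
    have hvR : v ∉ R := fun h => h.2 rfl
    have hvS' : v ∈ S' := ⟨hvS, hvR⟩
    -- S has at least two elements
    obtain ⟨y₀, hy₀S, hy₀B⟩ : ∃ y₀ ∈ S, y₀ ∉ B := by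
      by_contra h
      push_neg at h
      exact hBS (le_antisymm hBsub h)
    have hS2 : ∃ x ∈ S, ∃ y ∈ S, x ≠ y := ⟨v, hvS, y₀, hy₀S, fun h => hy₀B (h ▸ hv)⟩
    -- B nontrivial, so R nonempty
    obtain ⟨u₀, hu₀R⟩ : R.Nonempty := by
      obtain ⟨a1, ha1, a2, ha2, h12⟩ := block_nontrivial hS hS2 hB
      by_cases h : a1 = v
      · exact ⟨a2, ha2, fun h2 => h12 (h.trans (Set.mem_singleton_iff.1 h2).symm)⟩
      · exact ⟨a1, ha1, h⟩
    have hexit : ∀ u ∈ R, ∀ w ∈ S, G.Adj u w → w ∉ R → w = v := by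
      intro u hu w hw hadj hwR
      have hwB : w ∈ B := hcl u hu.1 hu.2 w hw hadj
      by_contra hwv
      exact hwR ⟨hwB, hwv⟩
    have hS'pre : PreconnIn G S' := by
      intro a ha b hb
      obtain ⟨p, hsup⟩ := hS a ha.1 b hb.1
      exact (avoid_region S R v hexit hvS hvR p.length p rfl hsup).1 ha.2 hb.2
    have hS'lt : S'.ncard < S.ncard := by
      apply Set.ncard_lt_ncard _ (Set.toFinite S)
      exact ⟨Set.diff_subset, fun h => (h (hBsub hu₀R.1)).2 hu₀R⟩
    -- every u ∈ S' other than v has no neighbours in R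
    have hnonbr : ∀ u ∈ S', u ≠ v → {w ∈ S | G.Adj u w} = {w ∈ S' | G.Adj u w} := by
      intro u hu huv
      ext w
      constructor
      · rintro ⟨hw, hadj⟩
        refine ⟨⟨hw, fun hwR => ?_⟩, hadj⟩
        exact huv (hexit w hwR u hu.1 hadj.symm hu.2)
      · rintro ⟨hw, hadj⟩
        exact ⟨hw.1, hadj⟩
    -- Gallai property for S'
    have hGallai' : ∀ B'', BlockIn G S' B'' →
        IsCompleteSet G B'' ∨ (IsCycleSet G B'' ∧ Odd B''.ncard) := by
      intro B'' hB''
      obtain ⟨D, hD, hBD⟩ := exists_block_of_good (G := G)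
        (hB''.1.trans Set.diff_subset) hB''.2.1
      by_cases hDS' : D ⊆ S'
      · have hDB'' : D = B'' := hB''.2.2 D hBD hDS' hD.2.1
        exact hDB'' ▸ hGallai D hD
      · left
        obtain ⟨w, hwD, hwS'⟩ := Set.not_subset.1 hDS'
        have hwR : w ∈ R := by
          by_contra h
          exact hwS' ⟨hD.1 hwD, h⟩
        have hpd : PreconnIn G (D \ {v}) := by
          by_cases hvD : v ∈ D
          · exact hD.2.1.2.2 v hvD
          · rw [Set.diff_singleton_eq_self hvD]
            exact hD.2.1.2.1
        have hwD' : w ∈ D \ {v} := ⟨hwD, fun h => hvR ((Set.mem_singleton_iff.1 h) ▸ hwR)⟩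
        have hDsub : D \ {v} ⊆ R := by
          intro x hx
          obtain ⟨p, hsup⟩ := hpd w hwD' x hx
          exact stay_in_region p S R v hexit
            (fun z hz => ⟨hD.1 (hsup z hz).1, (hsup z hz).2⟩) hwR
        -- B'' ⊆ {v}
        intro x hx y hy hxy
        exfalso
        have hxB'' : x ∈ D := hBD hx
        have hyB'' : y ∈ D := hBD hy
        have hxv : x = v := by
          by_contra h
          exact ((hB''.1 hx).2) (hDsub ⟨hxB'', h⟩)
        have hyv : y = v := by
          by_contra h
          exact ((hB''.1 hy).2) (hDsub ⟨hyB'', h⟩)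
        exact hxy (hxv.trans hyv.symm)
    -- apply IH
    obtain ⟨L', hL'card, hL'no⟩ := IH S'.ncard (lt_of_lt_of_le hS'lt hSn) S' le_rfl
      ⟨v, hvS'⟩ hS'pre hGallai'
    -- fresh palette of size d
    rcases hGallai B hB with hcomp | ⟨⟨-, -, hreg⟩, hodd⟩
    · -- complete block glue
      set d : ℕ := B.ncard - 1 with hd
      set Mx : ℕ := (Finset.univ.sup (fun u : V => (L' u).sup id)) + 1 with hMx
      set C : Finset ℕ := (Finset.range d).image (· + Mx) with hC
      have hCcard : C.card = d := by
        rw [hC, Finset.card_image_of_injective _ (add_left_injective Mx), Finset.card_range]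
      have hCfresh : ∀ u : V, ∀ c ∈ C, c ∉ L' u := by
        intro u c hc hcL
        obtain ⟨k, -, rfl⟩ := Finset.mem_image.1 hc
        have h1 : k + Mx ≤ (L' u).sup id := Finset.le_sup (f := id) hcL
        have h2 : (L' u).sup id ≤ Finset.univ.sup (fun u : V => (L' u).sup id) :=
          Finset.le_sup (f := fun u : V => (L' u).sup id) (Finset.mem_univ u)
        omega
      refine ⟨fun u => if u ∈ R then C else if u = v then L' v ∪ C else L' u, ?_, ?_⟩
      · intro u hu
        by_cases huR : u ∈ R
        · simp only [if_pos huR]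
          rw [hCcard, hd]
          have huB : u ∈ B := huR.1
          have hset : {w ∈ S | G.Adj u w} = B \ {u} := by
            ext w
            constructor
            · rintro ⟨hw, hadj⟩
              exact ⟨hcl u huB huR.2 w hw hadj,
                fun h => G.ne_of_adj hadj (Set.mem_singleton_iff.1 h).symm⟩
            · rintro ⟨hw, hwu⟩
              exact ⟨hBsub hw, hcomp u huB w hw (fun h => hwu (h ▸ rfl))⟩
          rw [degIn, hset, Set.ncard_diff_singleton_of_mem huB]
        · simp only [if_neg huR]
          by_cases huv : u = v
          · subst huv
            simp only [eq_self_iff_true, if_true]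
            have hdisj : Disjoint (L' u) C := by
              rw [Finset.disjoint_right]
              exact fun c hc => hCfresh u c hc
            rw [Finset.card_union_of_disjoint hdisj, hL'card u ⟨hu, huR⟩, hCcard]
            have hsplit : {w ∈ S | G.Adj u w} = {w ∈ S' | G.Adj u w} ∪ {w ∈ R | G.Adj u w} := by
              ext w
              constructor
              · rintro ⟨hw, hadj⟩
                by_cases h : w ∈ R
                exacts [Or.inr ⟨h, hadj⟩, Or.inl ⟨⟨hw, h⟩, hadj⟩]
              · rintro (⟨hw, hadj⟩ | ⟨hw, hadj⟩)
                exacts [⟨hw.1, hadj⟩, ⟨hBsub hw.1, hadj⟩]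
            have hRadj : {w ∈ R | G.Adj u w} = R := by
              ext w
              refine ⟨fun h => h.1, fun hw => ⟨hw, hcomp u hv w hw.1 (fun h => hw.2 (h ▸ rfl))⟩⟩
            have hdisj2 : Disjoint {w ∈ S' | G.Adj u w} {w ∈ R | G.Adj u w} := by
              rw [Set.disjoint_left]
              rintro w ⟨hw, -⟩ ⟨hw', -⟩
              exact hw.2 hw'
            simp only [degIn]
            rw [hsplit, Set.ncard_union_eq hdisj2, hRadj, hR,
              Set.ncard_diff_singleton_of_mem hv, hd]
          · simp only [if_neg huv]
            rw [hL'card u ⟨hu, huR⟩, degIn, degIn, hnonbr u ⟨hu, huR⟩ huv]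
      · rintro ⟨φ, hm, hp⟩
        have hRcard : R.ncard = d := by
          rw [hR, Set.ncard_diff_singleton_of_mem hv, hd]
        have hRclique : ∀ x ∈ R, ∀ y ∈ R, x ≠ y → G.Adj x y :=
          fun x hx y hy hxy => hcomp x hx.1 y hy.1 hxy
        have hRproper : ∀ x ∈ R, ∀ y ∈ R, G.Adj x y → φ x ≠ φ y :=
          fun x hx y hy hadj => hp x (hBsub hx.1) y (hBsub hy.1) hadj
        have hphiC : ∀ x ∈ R, φ x ∈ C := by
          intro x hx
          have := hm x (hBsub hx.1)
          simp only [if_pos hx] at this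
          exact this
        have hsurj := clique_surj hRclique hRproper hphiC (hCcard.trans hRcard.symm)
        have hφvC : φ v ∉ C := by
          intro hφv
          obtain ⟨x, hx, hφx⟩ := hsurj (φ v) hφv
          exact hp v hvS x (hBsub hx.1)
            (hcomp v hv x hx.1 (fun h => hx.2 (h.symm ▸ rfl))) hφx.symm
        have hφvL : φ v ∈ L' v := by
          have := hm v hvS
          simp only [if_neg hvR, eq_self_iff_true, if_true] at this
          rcases Finset.mem_union.1 this with h | h
          exacts [h, absurd h hφvC]
        apply hL'no
        refine ⟨φ, ?_, fun x hx y hy hadj => hp x hx.1 y hy.1 hadj⟩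
        intro x hx
        by_cases hxv : x = v
        · subst hxv; exact hφvL
        · have := hm x hx.1
          simp only [if_neg hx.2, if_neg hxv] at this
          exact this
    · -- odd cycle block glue
      set Mx : ℕ := (Finset.univ.sup (fun u : V => (L' u).sup id)) + 1 with hMx
      set C : Finset ℕ := {Mx, Mx + 1} with hC
      have hCcard : C.card = 2 := by
        rw [hC]
        exact Finset.card_pair (by omega)
      have hCfresh : ∀ u : V, ∀ c ∈ C, c ∉ L' u := by
        intro u c hc hcL
        have h1 : c ≤ (L' u).sup id := Finset.le_sup (f := id) hcL
        have h2 : (L' u).sup id ≤ Finset.univ.sup (fun u : V => (L' u).sup id) :=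
          Finset.le_sup (f := fun u : V => (L' u).sup id) (Finset.mem_univ u)
        rw [hC] at hc
        simp only [Finset.mem_insert, Finset.mem_singleton] at hc
        omega
      refine ⟨fun u => if u ∈ R then C else if u = v then L' v ∪ C else L' u, ?_, ?_⟩
      · intro u hu
        by_cases huR : u ∈ R
        · simp only [if_pos huR]
          rw [hCcard]
          have huB : u ∈ B := huR.1
          have hset : {w ∈ S | G.Adj u w} = {w ∈ B | G.Adj u w} := by
            ext w
            exact ⟨fun ⟨hw, hadj⟩ => ⟨hcl u huB huR.2 w hw hadj, hadj⟩,
              fun ⟨hw, hadj⟩ => ⟨hBsub hw, hadj⟩⟩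
          rw [degIn, hset, hreg u huB]
        · simp only [if_neg huR]
          by_cases huv : u = v
          · subst huv
            simp only [eq_self_iff_true, if_true]
            have hdisj : Disjoint (L' u) C := by
              rw [Finset.disjoint_right]
              exact fun c hc => hCfresh u c hc
            rw [Finset.card_union_of_disjoint hdisj, hL'card u ⟨hu, huR⟩, hCcard]
            have hsplit : {w ∈ S | G.Adj u w} = {w ∈ S' | G.Adj u w} ∪ {w ∈ R | G.Adj u w} := by
              ext w
              constructor
              · rintro ⟨hw, hadj⟩
                by_cases h : w ∈ R
                exacts [Or.inr ⟨h, hadj⟩, Or.inl ⟨⟨hw, h⟩, hadj⟩]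
              · rintro (⟨hw, hadj⟩ | ⟨hw, hadj⟩)
                exacts [⟨hw.1, hadj⟩, ⟨hBsub hw.1, hadj⟩]
            have hRadj : {w ∈ R | G.Adj u w} = {w ∈ B | G.Adj u w} := by
              ext w
              constructor
              · rintro ⟨hw, hadj⟩
                exact ⟨hw.1, hadj⟩
              · rintro ⟨hw, hadj⟩
                exact ⟨⟨hw, fun h => G.ne_of_adj hadj (Set.mem_singleton_iff.1 h).symm⟩, hadj⟩
            have hdisj2 : Disjoint {w ∈ S' | G.Adj u w} {w ∈ R | G.Adj u w} := by
              rw [Set.disjoint_left]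
              rintro w ⟨hw, -⟩ ⟨hw', -⟩
              exact hw.2 hw'
            simp only [degIn]
            rw [hsplit, Set.ncard_union_eq hdisj2, hRadj, hreg u hv]
          · simp only [if_neg huv]
            rw [hL'card u ⟨hu, huR⟩, degIn, degIn, hnonbr u ⟨hu, huR⟩ huv]
      · rintro ⟨φ, hm, hp⟩
        have hφvC : φ v ∉ C := by
          intro hφv
          have hmemB : ∀ u ∈ B, φ u = Mx ∨ φ u = Mx + 1 := by
            intro u hu
            by_cases huv : u = v
            · subst huv
              rw [hC] at hφv
              simpa using hφv
            · have huR : u ∈ R := ⟨hu, huv⟩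
              have := hm u (hBsub hu)
              simp only [if_pos huR, hC] at this
              simpa using this
          have hBproper : ∀ x ∈ B, ∀ y ∈ B, G.Adj x y → φ x ≠ φ y :=
            fun x hx y hy hadj => hp x (hBsub hx) y (hBsub hy) hadj
          have := parity_lemma (G := G) hreg (by omega : Mx ≠ Mx + 1) hmemB hBproper
          exact Nat.not_even_iff_odd.2 hodd this
        have hφvL : φ v ∈ L' v := by
          have := hm v hvS
          simp only [if_neg hvR, eq_self_iff_true, if_true] at this
          rcases Finset.mem_union.1 this with h | h
          exacts [h, absurd h hφvC]
        apply hL'no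
        refine ⟨φ, ?_, fun x hx y hy hadj => hp x hx.1 y hy.1 hadj⟩
        intro x hx
        by_cases hxv : x = v
        · subst hxv; exact hφvL
        · have := hm x hx.1
          simp only [if_neg hx.2, if_neg hxv] at this
          exact this

end GTaux

/-- A connected Gallai-tree is not degree-choosable: there is a list assignment `L`
with `|L(v)| = deg v` for all `v` admitting no proper `L`-colouring. -/
theorem stmt_7 {V : Type*} [Fintype V] (G : SimpleGraph V) (hG : IsGallaiTree G) :
    ∃ L : V → Finset ℕ,
      (∀ v, (L v).card = deg G v) ∧
      ¬ ∃ φ : V → ℕ, (∀ v, φ v ∈ L v) ∧ ∀ u v, G.Adj u v → φ u ≠ φ v := by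
  classical
  obtain ⟨hconn, hblocks⟩ := hG
  have hne : (Set.univ : Set V).Nonempty := by
    obtain ⟨v⟩ := hconn.nonempty
    exact ⟨v, trivial⟩
  have hpre : GTaux.PreconnIn G Set.univ := by
    intro u _ v _
    obtain ⟨p⟩ := hconn.preconnected u v
    exact ⟨p, fun x _ => trivial⟩
  have hGallai : ∀ B, GTaux.BlockIn G Set.univ B →
      IsCompleteSet G B ∨ (IsCycleSet G B ∧ Odd B.ncard) :=
    fun B hB => hblocks B (GTaux.blockIn_univ_iff.1 hB)
  obtain ⟨L, hcard, hno⟩ :=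
    GTaux.main_lemma (Set.univ : Set V).ncard Set.univ le_rfl hne hpre hGallai
  refine ⟨L, fun v => ?_, fun ⟨φ, h1, h2⟩ => hno ⟨φ, fun v _ => h1 v, fun u _ w _ h => h2 u w h⟩⟩
  rw [hcard v trivial, GTaux.degIn_univ]
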